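/- For θ ∈ (0,1) and x ∈ ℕ, the CDF of the NDOPPE distribution satisfies F(x) := ∑_{w=0}^x f(w) = h(θ)·∑_{k=1}^r a_{k−1}·((k−1)!/θ^k)·((k+x)!/((k−1)!·x!))·∫_0^θ t^{k−1}(1−t)^x dt, i.e. F(x) is the h(θ)·a_{k−1}·(k−1)!/θ^k–weighted combination of the regularized incomplete beta functions I_θ(k, x+1). -/

import Mathlib

open scoped BigOperators

/-- `p x = ∑_{k=1}^r a_{k-1} (k-1)! C(x+k-1, x)` (index shifted: `k ∈ range r` stands for `k-1`). -/
noncomputable def p (r : ℕ) (a : ℕ → ℝ) (x : ℕ) : ℝ :=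
  ∑ k ∈ Finset.range r, a k * (Nat.factorial k : ℝ) * (Nat.choose (x + k) x : ℝ)

/-- `h θ = 1 / ∑_{k=1}^r a_{k-1} (k-1)! / θ^k` (index shifted). -/
noncomputable def h (r : ℕ) (a : ℕ → ℝ) (θ : ℝ) : ℝ :=
  1 / ∑ k ∈ Finset.range r, a k * (Nat.factorial k : ℝ) / θ ^ (k + 1)

/-- `A n t = ∑_{y₁+⋯+y_r = n} (n!/(y₁!⋯y_r!)) (∏_{k=1}^r (a_{k-1}(k-1)!)^{y_k})
    C(t + ∑_{k=1}^r k y_k − 1, t)`. -/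
noncomputable def A (r : ℕ) (a : ℕ → ℝ) (n t : ℕ) : ℝ :=
  ∑ y ∈ Finset.Nat.antidiagonalTuple r n,
    ((Nat.factorial n : ℝ) / ∏ k : Fin r, (Nat.factorial (y k) : ℝ)) *
      (∏ k : Fin r, (a (k : ℕ) * (Nat.factorial (k : ℕ) : ℝ)) ^ (y k)) *
      (Nat.choose (t + (∑ k : Fin r, ((k : ℕ) + 1) * y k) - 1) t : ℝ)

lemma int_rec (k x : ℕ) (θ : ℝ) :
    ((k : ℝ) + x + 2) * ∫ t in (0:ℝ)..θ, t ^ k * (1 - t) ^ (x + 1) =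
      ((x : ℝ) + 1) * (∫ t in (0:ℝ)..θ, t ^ k * (1 - t) ^ x) + θ ^ (k + 1) * (1 - θ) ^ (x + 1) := by
  have hder : ∀ t : ℝ, HasDerivAt (fun t : ℝ => t ^ (k + 1) * (1 - t) ^ (x + 1))
      (((k : ℝ) + x + 2) * (t ^ k * (1 - t) ^ (x + 1)) - ((x : ℝ) + 1) * (t ^ k * (1 - t) ^ x)) t := by
    intro t
    have h1 : HasDerivAt (fun t : ℝ => t ^ (k + 1)) (((k : ℝ) + 1) * t ^ k) t := by
      simpa using hasDerivAt_pow (k + 1) t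
    have h2 : HasDerivAt (fun t : ℝ => (1 - t) ^ (x + 1))
        (((x : ℝ) + 1) * (1 - t) ^ x * (-1)) t := by
      have : HasDerivAt (fun t : ℝ => 1 - t) (-1) t := by
        simpa using (hasDerivAt_id' t).const_sub (1:ℝ)
      simpa using this.fun_pow (x + 1)
    have := h1.fun_mul h2
    refine this.congr_deriv ?_
    ring
  have hint : IntervalIntegrable
      (fun t : ℝ => ((k : ℝ) + x + 2) * (t ^ k * (1 - t) ^ (x + 1)) -
        ((x : ℝ) + 1) * (t ^ k * (1 - t) ^ x)) MeasureTheory.volume 0 θ := by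
    apply Continuous.intervalIntegrable
    fun_prop
  have key := intervalIntegral.integral_eq_sub_of_hasDerivAt
      (f := fun t : ℝ => t ^ (k + 1) * (1 - t) ^ (x + 1)) (fun t _ => hder t) hint
  have hi1 : IntervalIntegrable (fun t : ℝ => t ^ k * (1 - t) ^ (x + 1)) MeasureTheory.volume 0 θ := by
    apply Continuous.intervalIntegrable; fun_prop
  have hi2 : IntervalIntegrable (fun t : ℝ => t ^ k * (1 - t) ^ x) MeasureTheory.volume 0 θ := by
    apply Continuous.intervalIntegrable; fun_prop
  rw [intervalIntegral.integral_sub ((hi1.const_mul _)) ((hi2.const_mul _)),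
      intervalIntegral.integral_const_mul, intervalIntegral.integral_const_mul] at key
  simp only [zero_pow, Nat.succ_ne_zero, ne_eq, not_false_iff, zero_mul, sub_zero] at key
  linarith [key]

lemma key_id (k x : ℕ) (θ : ℝ) :
    (Nat.factorial (k + 1 + x) : ℝ) * ∫ t in (0:ℝ)..θ, t ^ k * (1 - t) ^ x =
      θ ^ (k + 1) * (Nat.factorial k : ℝ) * (Nat.factorial x : ℝ) *
        ∑ w ∈ Finset.range (x + 1), (Nat.choose (w + k) w : ℝ) * (1 - θ) ^ w := by
  induction x with
  | zero =>
    have hθint : (∫ t in (0:ℝ)..θ, t ^ k * (1 - t) ^ 0) = θ ^ (k + 1) / ((k : ℝ) + 1) := by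
      simp only [pow_zero, mul_one]
      rw [integral_pow]
      rw [zero_pow (Nat.succ_ne_zero k)]
      ring
    rw [hθint]
    norm_num
    have hfac : (Nat.factorial (k + 1 + 0) : ℝ) = ((k : ℝ) + 1) * (Nat.factorial k : ℝ) := by
      simp [Nat.factorial_succ]
    rw [hfac]
    have hk : ((k : ℝ) + 1) ≠ 0 := by positivity
    field_simp
  | succ x ih =>
    have hrec := int_rec k x θ
    have hfact : (Nat.factorial (k + 1 + (x + 1)) : ℝ) =
        ((k : ℝ) + x + 2) * (Nat.factorial (k + 1 + x) : ℝ) := by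
      have he : k + 1 + (x + 1) = (k + 1 + x) + 1 := by ring
      rw [he, Nat.factorial_succ]; push_cast; ring
    have hchoose : (Nat.choose (x + 1 + k) (x + 1) : ℝ) * (Nat.factorial (x + 1) : ℝ) *
        (Nat.factorial k : ℝ) = (Nat.factorial (x + 1 + k) : ℝ) := by
      have h0 := Nat.choose_mul_factorial_mul_factorial (Nat.le_add_right (x + 1) k)
      have h2 : x + 1 + k - (x + 1) = k := by omega
      rw [h2] at h0
      exact_mod_cast congrArg (Nat.cast : ℕ → ℝ) h0
    have hc : (Nat.factorial (k + 1 + x) : ℝ) = (Nat.factorial (x + 1 + k) : ℝ) := by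
      norm_num [show k + 1 + x = x + 1 + k from by omega]
    have hfx1 : (Nat.factorial (x + 1) : ℝ) = ((x : ℝ) + 1) * (Nat.factorial x : ℝ) := by
      rw [Nat.factorial_succ]; push_cast; ring
    rw [Finset.sum_range_succ, hfact]
    linear_combination (Nat.factorial (k + 1 + x) : ℝ) * hrec + ((x : ℝ) + 1) * ih +
      θ ^ (k + 1) * (1 - θ) ^ (x + 1) * hc -
      θ ^ (k + 1) * (1 - θ) ^ (x + 1) * hchoose -
      θ ^ (k + 1) * (Nat.factorial k : ℝ) *
        (∑ w ∈ Finset.range (x + 1), (Nat.choose (w + k) w : ℝ) * (1 - θ) ^ w) * hfx1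

theorem ndoppe_cdf_eq_beta_mixture (r : ℕ) (hr : 1 ≤ r) (a : ℕ → ℝ) (ha : ∀ k, 0 ≤ a k)
    (hne : ∃ k, k < r ∧ a k ≠ 0) (θ : ℝ) (hθ : θ ∈ Set.Ioo (0 : ℝ) 1) (x : ℕ) :
    ∑ w ∈ Finset.range (x + 1), h r a θ * p r a w * (1 - θ) ^ w =
      h r a θ * ∑ k ∈ Finset.range r,
        a k * ((Nat.factorial k : ℝ) / θ ^ (k + 1)) *
          ((Nat.factorial (k + 1 + x) : ℝ) / ((Nat.factorial k : ℝ) * (Nat.factorial x : ℝ))) *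
          ∫ t in (0 : ℝ)..θ, t ^ k * (1 - t) ^ x := by
  obtain ⟨hθ0, hθ1⟩ := hθ
  have hθne : θ ≠ 0 := ne_of_gt hθ0
  have hmain : ∑ w ∈ Finset.range (x + 1), p r a w * (1 - θ) ^ w =
      ∑ k ∈ Finset.range r,
        a k * ((Nat.factorial k : ℝ) / θ ^ (k + 1)) *
          ((Nat.factorial (k + 1 + x) : ℝ) / ((Nat.factorial k : ℝ) * (Nat.factorial x : ℝ))) *
          ∫ t in (0 : ℝ)..θ, t ^ k * (1 - t) ^ x := by
    unfold p
    rw [show (∑ w ∈ Finset.range (x + 1),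
        (∑ k ∈ Finset.range r, a k * (Nat.factorial k : ℝ) * (Nat.choose (w + k) w : ℝ)) *
          (1 - θ) ^ w) =
        ∑ k ∈ Finset.range r, ∑ w ∈ Finset.range (x + 1),
          a k * (Nat.factorial k : ℝ) * (Nat.choose (w + k) w : ℝ) * (1 - θ) ^ w from by
      rw [Finset.sum_comm]
      exact Finset.sum_congr rfl fun w _ => by rw [Finset.sum_mul]]
    apply Finset.sum_congr rfl
    intro k _
    have hk := key_id k x θ
    have hkfac : (Nat.factorial k : ℝ) ≠ 0 := by positivity
    have hxfac : (Nat.factorial x : ℝ) ≠ 0 := by positivity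
    have hθp : θ ^ (k + 1) ≠ 0 := pow_ne_zero _ hθne
    have hsum : ∑ w ∈ Finset.range (x + 1), (Nat.choose (w + k) w : ℝ) * (1 - θ) ^ w =
        (Nat.factorial (k + 1 + x) : ℝ) * (∫ t in (0:ℝ)..θ, t ^ k * (1 - t) ^ x) /
          (θ ^ (k + 1) * (Nat.factorial k : ℝ) * (Nat.factorial x : ℝ)) := by
      field_simp
      linarith [hk]
    calc ∑ w ∈ Finset.range (x + 1),
          a k * (Nat.factorial k : ℝ) * (Nat.choose (w + k) w : ℝ) * (1 - θ) ^ w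
        = a k * (Nat.factorial k : ℝ) *
            ∑ w ∈ Finset.range (x + 1), (Nat.choose (w + k) w : ℝ) * (1 - θ) ^ w := by
          rw [Finset.mul_sum]; exact Finset.sum_congr rfl fun w _ => by ring
      _ = _ := by rw [hsum]; field_simp
  calc ∑ w ∈ Finset.range (x + 1), h r a θ * p r a w * (1 - θ) ^ w
      = h r a θ * ∑ w ∈ Finset.range (x + 1), p r a w * (1 - θ) ^ w := by
        rw [Finset.mul_sum]; exact Finset.sum_congr rfl fun w _ => by ring
    _ = _ := by rw [hmain]
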